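/- arXiv:2403.11824 — 3 statements merged into one kernel-verified Lean document; each statement's English description precedes it below -/
import Mathlib

section
/- Let V : ℝ → ℝ ∪ {−∞,+∞} be nondecreasing, let C ∈ [0,∞) and γ > 0 be such that V⁺(λx) ≤ λ^γ (V⁺(x) + C) for all λ ≥ 1, x ∈ ℝ. Then for every x ∈ ℝ, h ∈ ℝ^d and y ∈ ℝ^d, V⁺(x + h·y) ≤ (max(|h|, x⁺, 1))^γ ( Σ_{θ ∈ {−1,1}^d} V⁺(1 + θ·y) + C ), where |h| is the Euclidean norm, h·y the scalar product, and x⁺ = max(x,0). -/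
open scoped RealInnerProductSpace

/-- For a nondecreasing `V : ℝ → ℝ ∪ {±∞}` whose positive part satisfies
`V⁺(λx) ≤ λ^γ (V⁺(x) + C)` for `λ ≥ 1` (`C ≥ 0`, `γ > 0`), one has for every
`x ∈ ℝ` and `h, y ∈ ℝ^d`:
`V⁺(x + h·y) ≤ (max(|h|, x⁺, 1))^γ ( Σ_{θ ∈ {-1,1}^d} V⁺(1 + θ·y) + C )`,
where `|h|` is the Euclidean norm, `h·y` the scalar product and `x⁺ = max(x,0)`.
The sign vectors `θ ∈ {-1,1}^d` are encoded by `θ : Fin d → Bool`. -/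
theorem pos_part_bound (d : ℕ) (V : ℝ → EReal) (hV : Monotone V)
    (C γ : ℝ) (hC : 0 ≤ C) (hγ : 0 < γ)
    (hVp : ∀ l x : ℝ, 1 ≤ l →
      max (V (l * x)) 0 ≤ ((l ^ γ : ℝ) : EReal) * (max (V x) 0 + (C : EReal))) :
    ∀ (x : ℝ) (h y : EuclideanSpace ℝ (Fin d)),
      max (V (x + ⟪h, y⟫)) 0 ≤
        (((max (max ‖h‖ (max x 0)) 1) ^ γ : ℝ) : EReal) *
          ((∑ θ : Fin d → Bool,
              max (V (1 + ∑ i, (if θ i then (1 : ℝ) else -1) * y i)) 0) + (C : EReal)) := by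
  intro x h y
  set l : ℝ := max (max ‖h‖ (max x 0)) 1 with hl_def
  have hl1 : (1:ℝ) ≤ l := le_max_right _ _
  have hlh : ‖h‖ ≤ l := le_trans (le_max_left _ _) (le_max_left _ _)
  have hlx : x ≤ l := le_trans (le_max_left _ _) (le_trans (le_max_right _ _) (le_max_left _ _))
  set θh : Fin d → Bool := fun i => decide (0 ≤ y i) with hθ
  have habs : ∀ i, (if θh i then (1:ℝ) else -1) * y i = |y i| := by
    intro i
    by_cases hy : 0 ≤ y i
    · simp [hθ, hy, abs_of_nonneg hy]
    · simp only [hθ, hy, decide_false, if_false]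
      rw [abs_of_neg (lt_of_not_ge hy)]; simp
  set s : ℝ := ∑ i, |y i| with hs_def
  have hs0 : 0 ≤ s := Finset.sum_nonneg fun i _ => abs_nonneg _
  have hip : ⟪h, y⟫ ≤ ‖h‖ * s := by
    rw [PiLp.inner_apply]
    simp only [RCLike.inner_apply', conj_trivial]
    calc ∑ i, h i * y i ≤ ∑ i, |h i| * |y i| := by
          apply Finset.sum_le_sum; intro i _
          calc h i * y i ≤ |h i * y i| := le_abs_self _
            _ = |h i| * |y i| := abs_mul _ _
      _ ≤ ∑ i, ‖h‖ * |y i| := by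
          apply Finset.sum_le_sum; intro i _
          refine mul_le_mul_of_nonneg_right ?_ (abs_nonneg _)
          rw [EuclideanSpace.norm_eq, ← Real.sqrt_sq_eq_abs]
          apply Real.sqrt_le_sqrt
          simpa [sq_abs] using Finset.single_le_sum
            (f := fun j => (h j)^2) (fun j _ => sq_nonneg _) (Finset.mem_univ i)
      _ = ‖h‖ * s := by rw [← Finset.mul_sum]
  have hkey : x + ⟪h, y⟫ ≤ l * (1 + s) := by
    have : ‖h‖ * s ≤ l * s := mul_le_mul_of_nonneg_right hlh hs0
    nlinarith
  have step1 : max (V (x + ⟪h, y⟫)) 0 ≤ max (V (l * (1 + s))) 0 :=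
    max_le_max (hV hkey) le_rfl
  have step2 := hVp l (1 + s) hl1
  have hterm : max (V (1 + s)) 0 ≤
      ∑ θ : Fin d → Bool, max (V (1 + ∑ i, (if θ i then (1:ℝ) else -1) * y i)) 0 := by
    have := Finset.single_le_sum (f := fun θ : Fin d → Bool =>
        max (V (1 + ∑ i, (if θ i then (1:ℝ) else -1) * y i)) 0)
      (fun θ _ => le_max_right _ _) (Finset.mem_univ θh)
    simpa [habs, hs_def] using this
  have step3 : max (V (1 + s)) 0 + (C : EReal) ≤
      (∑ θ : Fin d → Bool, max (V (1 + ∑ i, (if θ i then (1:ℝ) else -1) * y i)) 0) + (C : EReal) :=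
    add_le_add_left hterm _
  have hlγ : (0:EReal) ≤ ((l ^ γ : ℝ) : EReal) := by
    apply EReal.coe_nonneg.2
    positivity
  calc max (V (x + ⟪h, y⟫)) 0 ≤ max (V (l * (1 + s))) 0 := step1
    _ ≤ ((l ^ γ : ℝ) : EReal) * (max (V (1 + s)) 0 + (C : EReal)) := step2
    _ ≤ _ := mul_le_mul_of_nonneg_left step3 hlγ
end

section
/- Let (Ω, 𝔄, μ) be a probability space, Y : Ω → ℝ^d measurable, and W : Ω × ℝ → ℝ ∪ {−∞,+∞} jointly measurable such that W(ω,·) is upper semicontinuous for every ω. Assume that for every M > 0 there is a μ-integrable function G_M : Ω → [0,∞) with W⁺(ω, x + h·Y(ω)) ≤ G_M(ω) for all ω ∈ Ω and all (x,h) with |x| ≤ M and |h| ≤ M. Then the function Φ : ℝ × ℝ^d → ℝ ∪ {−∞,+∞} defined by Φ(x,h) = ∫ W(ω, x + h·Y(ω)) μ(dω) is upper semicontinuous. -/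
open MeasureTheory
open scoped ENNReal RealInnerProductSpace

/-- Positive part of an extended real, as an extended nonnegative real. -/
noncomputable def epos (x : EReal) : ℝ≥0∞ := if x = ⊤ then ⊤ else ENNReal.ofReal x.toReal

/-- Integral of an extended-real function with the convention `+∞ - ∞ = -∞` :
it equals `∫ f⁺ - ∫ f⁻` when one of the two parts is finite, and `-∞` when both are
infinite (in `EReal`, `⊤ - ⊤ = ⊥`). -/
noncomputable def eIntegral {Ω : Type*} [MeasurableSpace Ω] (μ : Measure Ω)
    (f : Ω → EReal) : EReal :=
  ((∫⁻ ω, epos (f ω) ∂μ : ℝ≥0∞) : EReal) - ((∫⁻ ω, epos (-(f ω)) ∂μ : ℝ≥0∞) : EReal)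

section Helpers

open Filter
open scoped Topology

lemma epos_top : epos ⊤ = ⊤ := by simp [epos]

lemma epos_coe (r : ℝ) : epos (r : EReal) = ENNReal.ofReal r := by
  simp [epos]

lemma epos_mono : Monotone epos := by
  intro a b hab
  by_cases hb : b = ⊤
  · simp [epos, hb]
  have ha : a ≠ ⊤ := fun h => hb (top_le_iff.mp (h ▸ hab))
  simp only [epos, ha, hb, if_false]
  by_cases habot : a = ⊥
  · simp [habot]
  exact ENNReal.ofReal_le_ofReal (EReal.toReal_le_toReal hab habot hb)

lemma measurable_epos : Measurable epos := by
  unfold epos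
  exact Measurable.ite (measurableSet_singleton ⊤) measurable_const
    (ENNReal.measurable_ofReal.comp measurable_ereal_toReal)

lemma epos_le_ofReal {x : EReal} {g : ℝ} (h : max x 0 ≤ ((g : ℝ) : EReal)) :
    epos x ≤ ENNReal.ofReal g := by
  have hx : x ≠ ⊤ := by
    intro hx
    rw [hx] at h
    simp only [max_eq_left (by norm_num : (0:EReal) ≤ ⊤), top_le_iff] at h
    exact (EReal.coe_ne_top g) h
  have hxg : x ≤ (g : EReal) := (le_max_left _ _).trans h
  simp only [epos, hx, if_false]
  by_cases hxb : x = ⊥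
  · have h0 : (0 : EReal) ≤ (g : EReal) := (le_max_right _ _).trans h
    have : (0:ℝ) ≤ g := by exact_mod_cast h0
    simp [hxb, ENNReal.ofReal_le_ofReal this]
  · exact ENNReal.ofReal_le_ofReal (by
      have := EReal.toReal_le_toReal hxg hxb (EReal.coe_ne_top g)
      simpa using this)

lemma limsup_epos_le {ι : Type*} {l : Filter ι} {u : ι → EReal} {L : EReal}
    (h : limsup u l ≤ L) : limsup (fun i => epos (u i)) l ≤ epos L := by
  refine le_of_forall_gt_imp_ge_of_dense fun c hc => ?_
  by_cases hctop : c = ⊤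
  · simp [hctop]
  have hL : L ≠ ⊤ := by
    intro hL; rw [hL, epos_top] at hc; exact (not_top_lt hc)
  have hc0 : 0 < c := lt_of_le_of_lt zero_le hc
  have hcr : 0 < c.toReal := ENNReal.toReal_pos hc0.ne' hctop
  have hL' : L < ((c.toReal : ℝ) : EReal) := by
    by_cases hLb : L = ⊥
    · rw [hLb]; exact bot_lt_iff_ne_bot.mpr (EReal.coe_ne_bot _)
    · have hlt : L.toReal < c.toReal := by
        have : ENNReal.ofReal L.toReal < ENNReal.ofReal c.toReal := by
          rw [ENNReal.ofReal_toReal hctop]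
          simpa [epos, hL] using hc
        exact ((ENNReal.ofReal_lt_ofReal_iff hcr).mp this)
      calc L = ((L.toReal : ℝ) : EReal) := (EReal.coe_toReal hL hLb).symm
        _ < _ := by exact_mod_cast hlt
  have hev : ∀ᶠ i in l, u i < ((c.toReal : ℝ) : EReal) :=
    eventually_lt_of_limsup_lt (lt_of_le_of_lt h hL')
  refine limsup_le_of_le (by isBoundedDefault) ?_
  filter_upwards [hev] with i hi
  calc epos (u i) ≤ epos ((c.toReal : ℝ) : EReal) := epos_mono hi.le
    _ = ENNReal.ofReal c.toReal := epos_coe _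
    _ = c := ENNReal.ofReal_toReal hctop

lemma le_liminf_epos {ι : Type*} {l : Filter ι} {u : ι → EReal} {L : EReal}
    (h : L ≤ liminf u l) : epos L ≤ liminf (fun i => epos (u i)) l := by
  refine le_of_forall_lt_imp_le_of_dense fun c hc => ?_
  have hctop : c ≠ ⊤ := (lt_of_lt_of_le hc le_top).ne
  obtain ⟨r, hrL, hcr⟩ : ∃ r : ℝ, ((r : ℝ) : EReal) < L ∧ c ≤ ENNReal.ofReal r := by
    by_cases hLt : L = ⊤
    · exact ⟨c.toReal + 1, by rw [hLt]; exact lt_top_iff_ne_top.mpr (EReal.coe_ne_top _),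
        (ENNReal.le_ofReal_iff_toReal_le hctop (by positivity)).mpr (by linarith)⟩
    · have hposL : 0 < L.toReal := by
        by_contra hpos
        push_neg at hpos
        have : epos L = 0 := by
          simp only [epos, hLt, if_false]
          exact ENNReal.ofReal_eq_zero.mpr hpos
        rw [this] at hc
        exact (not_lt_bot hc)
      have hLb : L ≠ ⊥ := by
        intro hLb; rw [hLb] at hposL; simp at hposL
      have hlt : c.toReal < L.toReal := by
        have : ENNReal.ofReal c.toReal < ENNReal.ofReal L.toReal := by
          rw [ENNReal.ofReal_toReal hctop]
          simpa [epos, hLt] using hc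
        exact (ENNReal.ofReal_lt_ofReal_iff hposL).mp this
      refine ⟨(c.toReal + L.toReal) / 2, ?_, ?_⟩
      · have h1 : ((((c.toReal + L.toReal) / 2 : ℝ)) : EReal) < ((L.toReal : ℝ) : EReal) :=
          EReal.coe_lt_coe_iff.mpr (by linarith)
        rwa [EReal.coe_toReal hLt hLb] at h1
      · exact (ENNReal.le_ofReal_iff_toReal_le hctop (by positivity)).mpr (by linarith)
  have hev : ∀ᶠ i in l, ((r : ℝ) : EReal) < u i :=
    eventually_lt_of_lt_liminf (lt_of_lt_of_le hrL h)
  refine le_liminf_of_le (by isBoundedDefault) ?_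
  filter_upwards [hev] with i hi
  calc c ≤ ENNReal.ofReal r := hcr
    _ = epos ((r : ℝ) : EReal) := (epos_coe _).symm
    _ ≤ epos (u i) := epos_mono hi.le

lemma key_limsup {Ω : Type*} [MeasurableSpace Ω] (μ : Measure Ω) (d : ℕ)
    (Y : Ω → EuclideanSpace ℝ (Fin d)) (hY : Measurable Y)
    (W : Ω × ℝ → EReal) (hW : Measurable W)
    (hWusc : ∀ ω : Ω, UpperSemicontinuous fun x : ℝ => W (ω, x))
    (p : ℝ × EuclideanSpace ℝ (Fin d)) (s : ℕ → ℝ × EuclideanSpace ℝ (Fin d))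
    (hs : Tendsto s atTop (𝓝 p))
    (G : Ω → ℝ) (hGint : Integrable G μ)
    (hGs : ∀ n ω, epos (W (ω, (s n).1 + ⟪(s n).2, Y ω⟫)) ≤ ENNReal.ofReal (G ω))
    (hGp : ∀ ω, epos (W (ω, p.1 + ⟪p.2, Y ω⟫)) ≤ ENNReal.ofReal (G ω)) :
    limsup (fun n => eIntegral μ fun ω => W (ω, (s n).1 + ⟪(s n).2, Y ω⟫)) atTop ≤
      eIntegral μ fun ω => W (ω, p.1 + ⟪p.2, Y ω⟫) := by
  set f : Ω → EReal := fun ω => W (ω, p.1 + ⟪p.2, Y ω⟫) with hf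
  set fn : ℕ → Ω → EReal := fun n ω => W (ω, (s n).1 + ⟪(s n).2, Y ω⟫) with hfn
  have hmeasfn : ∀ n, Measurable (fn n) := fun n =>
    hW.comp (measurable_id.prodMk (measurable_const.add (Measurable.inner measurable_const hY)))
  have hlimsup_pt : ∀ ω, limsup (fun n => fn n ω) atTop ≤ f ω := by
    intro ω
    have hcont : Continuous fun q : ℝ × EuclideanSpace ℝ (Fin d) => q.1 + ⟪q.2, Y ω⟫ :=
      continuous_fst.add (continuous_snd.inner continuous_const)
    have htend : Tendsto (fun n => (s n).1 + ⟪(s n).2, Y ω⟫) atTop (𝓝 (p.1 + ⟪p.2, Y ω⟫)) :=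
      (hcont.tendsto p).comp hs
    have h1 : limsup (fun n => fn n ω) atTop
        = limsup (fun x => W (ω, x)) (Filter.map (fun n => (s n).1 + ⟪(s n).2, Y ω⟫) atTop) := by
      rw [Filter.limsup, Filter.limsup, Filter.map_map]
      rfl
    rw [h1]
    calc limsup (fun x => W (ω, x)) (Filter.map (fun n => (s n).1 + ⟪(s n).2, Y ω⟫) atTop)
        ≤ limsup (fun x => W (ω, x)) (𝓝 (p.1 + ⟪p.2, Y ω⟫)) :=
          limsup_le_limsup_of_le htend
      _ ≤ f ω := (hWusc ω).limsup_le _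
  have hpos : ∀ ω, limsup (fun n => epos (fn n ω)) atTop ≤ epos (f ω) := fun ω =>
    limsup_epos_le (hlimsup_pt ω)
  have hneg : ∀ ω, epos (-(f ω)) ≤ liminf (fun n => epos (-(fn n ω))) atTop := by
    intro ω
    refine le_liminf_epos ?_
    have h3 : (fun n => -(fn n ω)) = -(fun n => fn n ω) := rfl
    have h2 : -(f ω) ≤ liminf (fun n => -(fn n ω)) atTop := by
      rw [h3, EReal.liminf_neg]
      exact EReal.neg_le_neg_iff.mpr (hlimsup_pt ω)
    exact h2
  set gb : Ω → ℝ≥0∞ := fun ω => ENNReal.ofReal (G ω) with hgb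
  have hgfin : ∫⁻ ω, gb ω ∂μ ≠ ⊤ := by
    refine ne_of_lt (lt_of_le_of_lt (lintegral_mono fun ω => ?_) hGint.hasFiniteIntegral)
    exact Real.ofReal_le_enorm (G ω)
  set a : ℕ → ℝ≥0∞ := fun n => ∫⁻ ω, epos (fn n ω) ∂μ with ha
  set b : ℕ → ℝ≥0∞ := fun n => ∫⁻ ω, epos (-(fn n ω)) ∂μ with hb
  set A : ℝ≥0∞ := ∫⁻ ω, epos (f ω) ∂μ with hA
  set B : ℝ≥0∞ := ∫⁻ ω, epos (-(f ω)) ∂μ with hB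
  have hmeasepos : ∀ n, Measurable fun ω => epos (fn n ω) := fun n =>
    measurable_epos.comp (hmeasfn n)
  have hmeaseneg : ∀ n, Measurable fun ω => epos (-(fn n ω)) := fun n =>
    measurable_epos.comp (continuous_neg.measurable.comp (hmeasfn n))
  have hAle : limsup a atTop ≤ A := by
    calc limsup a atTop ≤ ∫⁻ ω, limsup (fun n => epos (fn n ω)) atTop ∂μ :=
          limsup_lintegral_le gb hmeasepos (fun n => ae_of_all _ (hGs n)) hgfin
      _ ≤ A := lintegral_mono hpos
  have hBge : B ≤ liminf b atTop :=
    le_trans (lintegral_mono hneg) (lintegral_liminf_le hmeaseneg)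
  have hAfin : A ≠ ⊤ := by
    refine ne_of_lt (lt_of_le_of_lt (lintegral_mono hGp) (lt_of_le_of_ne le_top hgfin))
  have halimfin : limsup a atTop ≠ ⊤ := fun h => hAfin (top_le_iff.mp (h ▸ hAle))
  have hcoea : limsup (fun n => ((a n : ℝ≥0∞) : EReal)) atTop = ((limsup a atTop : ℝ≥0∞) : EReal) :=
    (EReal.coe_ennreal_strictMono.monotone.map_limsup_of_continuousAt a
      (continuous_coe_ennreal_ereal.continuousAt)).symm
  have hcoeb : liminf (fun n => ((b n : ℝ≥0∞) : EReal)) atTop = ((liminf b atTop : ℝ≥0∞) : EReal) :=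
    (EReal.coe_ennreal_strictMono.monotone.map_liminf_of_continuousAt b
      (continuous_coe_ennreal_ereal.continuousAt)).symm
  have hgoal : (fun n => eIntegral μ fun ω => W (ω, (s n).1 + ⟪(s n).2, Y ω⟫))
      = fun n => ((a n : ℝ≥0∞) : EReal) + (-((b n : ℝ≥0∞) : EReal)) := by
    funext n
    simp only [eIntegral, sub_eq_add_neg]
    rfl
  rw [hgoal]
  have hstep : limsup (fun n => ((a n : ℝ≥0∞) : EReal) + (-((b n : ℝ≥0∞) : EReal))) atTop
      ≤ limsup (fun n => ((a n : ℝ≥0∞) : EReal)) atTop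
        + limsup (fun n => -((b n : ℝ≥0∞) : EReal)) atTop := by
    refine EReal.limsup_add_le (Or.inl ?_) (Or.inl ?_)
    · rw [hcoea]; exact EReal.coe_ennreal_ne_bot _
    · rw [hcoea]; exact fun h => halimfin (EReal.coe_ennreal_eq_top_iff.mp h)
  refine le_trans hstep ?_
  have hnegb : (fun n => -((b n : ℝ≥0∞) : EReal)) = -(fun n => ((b n : ℝ≥0∞) : EReal)) := rfl
  rw [hnegb, EReal.limsup_neg, hcoea, hcoeb]
  show ((limsup a atTop : ℝ≥0∞) : EReal) + (-((liminf b atTop : ℝ≥0∞) : EReal))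
      ≤ ((A : ℝ≥0∞) : EReal) - ((B : ℝ≥0∞) : EReal)
  rw [sub_eq_add_neg]
  refine add_le_add ?_ (EReal.neg_le_neg_iff.mpr ?_)
  · exact EReal.coe_ennreal_le_coe_ennreal_iff.mpr hAle
  · exact EReal.coe_ennreal_le_coe_ennreal_iff.mpr hBge

end Helpers

open Filter
open scoped Topology


/-- If `W(ω,·)` is usc for every `ω`, `W` is jointly measurable, and for every `M > 0`
the positive part `W⁺(ω, x + h·Y(ω))` is dominated, uniformly over `|x| ≤ M`, `|h| ≤ M`,
by an integrable function `G_M`, then `Φ(x,h) = ∫ W(ω, x + h·Y(ω)) μ(dω)` is upper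
semicontinuous. -/
theorem upperSemicontinuous_expected_utility {Ω : Type*} [MeasurableSpace Ω]
    (μ : Measure Ω) [IsProbabilityMeasure μ] (d : ℕ)
    (Y : Ω → EuclideanSpace ℝ (Fin d)) (hY : Measurable Y)
    (W : Ω × ℝ → EReal) (hW : Measurable W)
    (hWusc : ∀ ω : Ω, UpperSemicontinuous fun x : ℝ => W (ω, x))
    (hdom : ∀ M : ℝ, 0 < M → ∃ G : Ω → ℝ, Integrable G μ ∧ (∀ ω, 0 ≤ G ω) ∧
      ∀ (ω : Ω) (x : ℝ) (h : EuclideanSpace ℝ (Fin d)), |x| ≤ M → ‖h‖ ≤ M →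
        max (W (ω, x + ⟪h, Y ω⟫)) 0 ≤ ((G ω : ℝ) : EReal)) :
    UpperSemicontinuous fun p : ℝ × EuclideanSpace ℝ (Fin d) =>
      eIntegral μ fun ω => W (ω, p.1 + ⟪p.2, Y ω⟫) := by
  intro p y hy
  by_contra hcon
  rw [Filter.not_eventually] at hcon
  have hfreq : ∃ᶠ q in 𝓝 p, y ≤ eIntegral μ fun ω => W (ω, q.1 + ⟪q.2, Y ω⟫) :=
    hcon.mono fun q hq => not_lt.mp hq
  obtain ⟨s, hs, hsy⟩ := Filter.exists_seq_forall_of_frequently hfreq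
  set M : ℝ := |p.1| + ‖p.2‖ + 1 with hMdef
  have hM : 0 < M := by positivity
  obtain ⟨G, hGint, hGpos, hGdom⟩ := hdom M hM
  have hU : ∀ᶠ n in atTop, |(s n).1| ≤ M ∧ ‖(s n).2‖ ≤ M := by
    have hopen : IsOpen {q : ℝ × EuclideanSpace ℝ (Fin d) | |q.1| < M ∧ ‖q.2‖ < M} :=
      (isOpen_lt (continuous_fst.abs) continuous_const).inter
        (isOpen_lt continuous_snd.norm continuous_const)
    have hmem : p ∈ {q : ℝ × EuclideanSpace ℝ (Fin d) | |q.1| < M ∧ ‖q.2‖ < M} := by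
      constructor
      · have := norm_nonneg p.2; rw [hMdef]; linarith
      · have := abs_nonneg p.1; rw [hMdef]; linarith
    have := hs.eventually (hopen.mem_nhds hmem)
    exact this.mono fun n hn => ⟨hn.1.le, hn.2.le⟩
  obtain ⟨N, hN⟩ := eventually_atTop.mp hU
  set t : ℕ → ℝ × EuclideanSpace ℝ (Fin d) := fun n => s (n + N) with ht
  have hts : Tendsto t atTop (𝓝 p) := hs.comp (tendsto_add_atTop_nat N)
  have hGs : ∀ n ω, epos (W (ω, (t n).1 + ⟪(t n).2, Y ω⟫)) ≤ ENNReal.ofReal (G ω) := by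
    intro n ω
    exact epos_le_ofReal (hGdom ω _ _ (hN (n + N) (Nat.le_add_left N n)).1
      (hN (n + N) (Nat.le_add_left N n)).2)
  have hGp : ∀ ω, epos (W (ω, p.1 + ⟪p.2, Y ω⟫)) ≤ ENNReal.ofReal (G ω) := by
    intro ω
    refine epos_le_ofReal (hGdom ω _ _ ?_ ?_)
    · have := norm_nonneg p.2; rw [hMdef]; linarith
    · have := abs_nonneg p.1; rw [hMdef]; linarith
  have hkey := key_limsup μ d Y hY W hW hWusc p t hts G hGint hGs hGp
  have hev : ∀ᶠ n in atTop,
      (eIntegral μ fun ω => W (ω, (t n).1 + ⟪(t n).2, Y ω⟫)) < y :=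
    eventually_lt_of_limsup_lt (lt_of_le_of_lt hkey hy)
  obtain ⟨n, hn⟩ := hev.exists
  exact absurd (hsy (n + N)) (not_le.mpr hn)
end

section
/- Let (Ω, 𝔄, P) be a probability space and Z : Ω → ℝ an integrable random variable with P(Z > 0) > 0 and P(Z < 0) > 0. Define U : ℝ → ℝ by U(x) = x for x ≤ 0 and U(x) = 1 for x > 0, and φ : ℝ → ℝ by φ(h) = E_P[U(hZ)]. Then sup_{h ∈ ℝ} φ(h) = max(P(Z > 0), P(Z < 0)) and this supremum is not attained: φ(h) < max(P(Z > 0), P(Z < 0)) for every h ∈ ℝ. -/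
open MeasureTheory Filter

/-- The step utility `U(x) = x` for `x ≤ 0` and `U(x) = 1` for `x > 0`. -/
noncomputable def stepU (x : ℝ) : ℝ := if x ≤ 0 then x else 1

/-- For an integrable `Z` with `P(Z>0) > 0` and `P(Z<0) > 0`, the function
`φ(h) = E_P[U(hZ)]` with the step utility `U` has supremum
`max(P(Z>0), P(Z<0))`, and this supremum is not attained: `φ(h) < max(P(Z>0), P(Z<0))`
for every `h ∈ ℝ`. -/
theorem step_utility_sup_not_attained {Ω : Type*} [MeasurableSpace Ω]
    (P : Measure Ω) [IsProbabilityMeasure P]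
    (Z : Ω → ℝ) (hZm : Measurable Z) (hZ : Integrable Z P)
    (hpos : 0 < P {ω | 0 < Z ω}) (hneg : 0 < P {ω | Z ω < 0}) :
    IsLUB (Set.range fun h : ℝ => ∫ ω, stepU (h * Z ω) ∂P)
        (max (P {ω | 0 < Z ω}).toReal (P {ω | Z ω < 0}).toReal) ∧
      ∀ h : ℝ, ∫ ω, stepU (h * Z ω) ∂P <
        max (P {ω | 0 < Z ω}).toReal (P {ω | Z ω < 0}).toReal := by
  classical
  set p := (P {ω | 0 < Z ω}).toReal with hpdef
  set q := (P {ω | Z ω < 0}).toReal with hqdef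
  have hsPos : MeasurableSet {ω | 0 < Z ω} := hZm measurableSet_Ioi
  have hsNeg : MeasurableSet {ω | Z ω < 0} := hZm measurableSet_Iio
  have hp0 : 0 < p := ENNReal.toReal_pos hpos.ne' (measure_ne_top P _)
  have hq0 : 0 < q := ENNReal.toReal_pos hneg.ne' (measure_ne_top P _)
  have hnegpart : Integrable (fun ω => max (-Z ω) 0) P := hZ.neg_part
  have hpospart : Integrable (fun ω => max (Z ω) 0) P := hZ.pos_part
  set A := ∫ ω, max (-Z ω) 0 ∂P with hAdef
  set B := ∫ ω, max (Z ω) 0 ∂P with hBdef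
  -- A > 0
  have hA : 0 < A := by
    rcases lt_or_eq_of_le (integral_nonneg (fun ω => le_max_right _ _) : 0 ≤ A) with h | h
    · exact h
    · exfalso
      have h0 : (fun ω => max (-Z ω) 0) =ᵐ[P] 0 :=
        (integral_eq_zero_iff_of_nonneg (fun ω => le_max_right _ _) hnegpart).mp h.symm
      have : P {ω | Z ω < 0} = 0 := by
        refine measure_mono_null (fun ω hω => ?_) h0
        simp only [Set.mem_setOf_eq, Set.mem_compl_iff] at hω ⊢
        intro hc
        have : max (-Z ω) 0 = 0 := hc
        have : 0 < max (-Z ω) 0 := lt_max_of_lt_left (by linarith)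
        linarith
      exact absurd this hneg.ne'
  have hB : 0 < B := by
    rcases lt_or_eq_of_le (integral_nonneg (fun ω => le_max_right _ _) : 0 ≤ B) with h | h
    · exact h
    · exfalso
      have h0 : (fun ω => max (Z ω) 0) =ᵐ[P] 0 :=
        (integral_eq_zero_iff_of_nonneg (fun ω => le_max_right _ _) hpospart).mp h.symm
      have : P {ω | 0 < Z ω} = 0 := by
        refine measure_mono_null (fun ω hω => ?_) h0
        simp only [Set.mem_setOf_eq, Set.mem_compl_iff] at hω ⊢
        intro hc
        have : max (Z ω) 0 = 0 := hc
        have : 0 < max (Z ω) 0 := lt_max_of_lt_left hω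
        linarith
      exact absurd this hpos.ne'
  -- value for h > 0
  have key_pos : ∀ h : ℝ, 0 < h → (∫ ω, stepU (h * Z ω) ∂P) = p - h * A := by
    intro h hh
    have heq : (fun ω => stepU (h * Z ω)) =
        fun ω => (-h) * max (-Z ω) 0 + Set.indicator {ω | 0 < Z ω} (fun _ => (1 : ℝ)) ω := by
      funext ω
      by_cases hz : Z ω ≤ 0
      · have h1 : h * Z ω ≤ 0 := mul_nonpos_of_nonneg_of_nonpos hh.le hz
        have h2 : max (-Z ω) 0 = -Z ω := max_eq_left (by linarith)
        have h3 : ω ∉ {ω | 0 < Z ω} := by simp [Set.mem_setOf_eq]; linarith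
        simp only [stepU, if_pos h1, Set.indicator_of_notMem h3, h2, add_zero]
        ring
      · push_neg at hz
        have h1 : ¬ h * Z ω ≤ 0 := not_le.mpr (mul_pos hh hz)
        have h2 : max (-Z ω) 0 = 0 := max_eq_right (by linarith)
        have h3 : ω ∈ {ω | 0 < Z ω} := hz
        simp [stepU, h1, h2, Set.indicator_of_mem h3]
    rw [heq, integral_add (hnegpart.const_mul (-h))
      ((integrable_const (1 : ℝ)).indicator hsPos), integral_const_mul,
      integral_indicator_const _ hsPos]
    simp [smul_eq_mul, Measure.real]
    ring
  -- value for h < 0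
  have key_neg : ∀ h : ℝ, h < 0 → (∫ ω, stepU (h * Z ω) ∂P) = q + h * B := by
    intro h hh
    have heq : (fun ω => stepU (h * Z ω)) =
        fun ω => h * max (Z ω) 0 + Set.indicator {ω | Z ω < 0} (fun _ => (1 : ℝ)) ω := by
      funext ω
      by_cases hz : 0 ≤ Z ω
      · have h1 : h * Z ω ≤ 0 := mul_nonpos_of_nonpos_of_nonneg hh.le hz
        have h2 : max (Z ω) 0 = Z ω := max_eq_left hz
        have h3 : ω ∉ {ω | Z ω < 0} := by simp [Set.mem_setOf_eq]; linarith
        simp [stepU, h1, h2, Set.indicator_of_notMem h3]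
      · push_neg at hz
        have h1 : ¬ h * Z ω ≤ 0 := not_le.mpr (mul_pos_of_neg_of_neg hh hz)
        have h2 : max (Z ω) 0 = 0 := max_eq_right hz.le
        have h3 : ω ∈ {ω | Z ω < 0} := hz
        simp [stepU, h1, h2, Set.indicator_of_mem h3]
    rw [heq, integral_add (hpospart.const_mul h)
      ((integrable_const (1 : ℝ)).indicator hsNeg), integral_const_mul,
      integral_indicator_const _ hsNeg]
    simp [smul_eq_mul, Measure.real]
    ring
  -- strict inequality everywhere
  have hsup : ∀ h : ℝ, (∫ ω, stepU (h * Z ω) ∂P) < max p q := by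
    intro h
    rcases lt_trichotomy h 0 with hh | hh | hh
    · rw [key_neg h hh]
      have : h * B < 0 := mul_neg_of_neg_of_pos hh hB
      calc q + h * B < q := by linarith
        _ ≤ max p q := le_max_right _ _
    · subst hh
      have : (∫ ω, stepU ((0:ℝ) * Z ω) ∂P) = 0 := by
        simp [stepU]
      rw [this]
      exact lt_of_lt_of_le hp0 (le_max_left _ _)
    · rw [key_pos h hh]
      have : 0 < h * A := mul_pos hh hA
      calc p - h * A < p := by linarith
        _ ≤ max p q := le_max_left _ _
  refine ⟨⟨?_, ?_⟩, hsup⟩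
  · rintro x ⟨h, rfl⟩
    exact (hsup h).le
  · intro b hb
    have hpb : p ≤ b := by
      have ht : Tendsto (fun h : ℝ => p - h * A) (nhdsWithin 0 (Set.Ioi 0)) (nhds p) := by
        have : Tendsto (fun h : ℝ => p - h * A) (nhds 0) (nhds (p - 0 * A)) := by
          exact (tendsto_const_nhds.sub ((continuous_id.mul continuous_const).tendsto 0))
        simpa using this.mono_left nhdsWithin_le_nhds
      refine le_of_tendsto ht ?_
      filter_upwards [self_mem_nhdsWithin] with h hh
      rw [← key_pos h hh]
      exact hb ⟨h, rfl⟩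
    have hqb : q ≤ b := by
      have ht : Tendsto (fun h : ℝ => q + h * B) (nhdsWithin 0 (Set.Iio 0)) (nhds q) := by
        have : Tendsto (fun h : ℝ => q + h * B) (nhds 0) (nhds (q + 0 * B)) := by
          exact (tendsto_const_nhds.add ((continuous_id.mul continuous_const).tendsto 0))
        simpa using this.mono_left nhdsWithin_le_nhds
      refine le_of_tendsto ht ?_
      filter_upwards [self_mem_nhdsWithin] with h hh
      rw [← key_neg h hh]
      exact hb ⟨h, rfl⟩
    exact max_le hpb hqb
end
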